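/- Nonexistence of positive solutions for λ ≥ λ₁ with nonnegative superlinear coefficients (one-dimensional case, λ₁((0,1)) = π²): Let n ≥ 2 be a natural number, λ ≥ π², and a : ℕ → ℝ with a i ≥ 0 for every i ∈ {2,…,n} and a j > 0 for some j ∈ {2,…,n}. Suppose u : ℝ → ℝ is continuous on the closed interval [0,1], twice continuously differentiable on the open interval (0,1) (ContDiffOn ℝ 2 u (Ioo 0 1)), satisfies u(0) = 0, u(1) = 0, u(x) > 0 for all x ∈ (0,1), and −(deriv (deriv u)) x = λ u(x) + Σ_{i=2}^n a i · u(x)^i for all x ∈ (0,1). Then a contradiction follows (no such u exists). -/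

import Mathlib

open Set Real Filter Topology

/-- Nonexistence of positive solutions for `λ ≥ λ₁((0,1)) = π²` with
nonnegative superlinear coefficients (one-dimensional case). -/
theorem no_positive_solution_of_lam_ge_lam1
    (n : ℕ) (hn : 2 ≤ n) (lam : ℝ) (hlam : Real.pi ^ 2 ≤ lam)
    (a : ℕ → ℝ) (ha : ∀ i ∈ Finset.Icc 2 n, 0 ≤ a i)
    (hj : ∃ j ∈ Finset.Icc 2 n, 0 < a j)
    (u : ℝ → ℝ)
    (huc : ContinuousOn u (Icc 0 1))
    (hud : ContDiffOn ℝ 2 u (Ioo 0 1))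
    (hu0 : u 0 = 0) (hu1 : u 1 = 0)
    (hupos : ∀ x ∈ Ioo (0 : ℝ) 1, 0 < u x)
    (heq : ∀ x ∈ Ioo (0 : ℝ) 1,
      -(deriv (deriv u) x) = lam * u x + ∑ i ∈ Finset.Icc 2 n, a i * u x ^ i) :
    False := by
  obtain ⟨j, hjmem, hja⟩ := hj
  have hopen : IsOpen (Ioo (0:ℝ) 1) := isOpen_Ioo
  have hudiff : DifferentiableOn ℝ u (Ioo 0 1) := hud.differentiableOn (by norm_num)
  have hu' : ∀ x ∈ Ioo (0:ℝ) 1, HasDerivAt u (deriv u x) x := fun x hx =>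
    (hudiff.differentiableAt (hopen.mem_nhds hx)).hasDerivAt
  have hcd : ContDiffOn ℝ 1 (deriv u) (Ioo 0 1) := hud.deriv_of_isOpen hopen (by norm_num)
  have hddiff : DifferentiableOn ℝ (deriv u) (Ioo 0 1) := hcd.differentiableOn one_ne_zero
  have hd' : ∀ x ∈ Ioo (0:ℝ) 1, HasDerivAt (deriv u) (deriv (deriv u) x) x := fun x hx =>
    (hddiff.differentiableAt (hopen.mem_nhds hx)).hasDerivAt
  have hcontd : ContinuousOn (deriv u) (Ioo 0 1) := hcd.continuousOn
  -- positivity of the superlinear sum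
  have hS : ∀ x ∈ Ioo (0:ℝ) 1, 0 < ∑ i ∈ Finset.Icc 2 n, a i * u x ^ i := fun x hx =>
    Finset.sum_pos' (fun i hi => mul_nonneg (ha i hi) (pow_nonneg (hupos x hx).le i))
      ⟨j, hjmem, mul_pos hja (pow_pos (hupos x hx) j)⟩
  have hd2neg : ∀ x ∈ Ioo (0:ℝ) 1, deriv (deriv u) x + π ^ 2 * u x < 0 := by
    intro x hx
    have h1 := heq x hx
    have h2 : π ^ 2 * u x ≤ lam * u x :=
      mul_le_mul_of_nonneg_right hlam (hupos x hx).le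
    linarith [hS x hx]
  -- the Wronskian-type function
  set W : ℝ → ℝ := fun x => deriv u x * Real.sin (π * x) - π * (u x * Real.cos (π * x))
    with hWdef
  have hsinpos : ∀ x ∈ Ioo (0:ℝ) 1, 0 < Real.sin (π * x) := by
    intro x hx
    exact Real.sin_pos_of_pos_of_lt_pi (mul_pos pi_pos hx.1)
      (by nlinarith [pi_pos, hx.2])
  have hWd : ∀ x ∈ Ioo (0:ℝ) 1,
      HasDerivAt W (Real.sin (π * x) * (deriv (deriv u) x + π ^ 2 * u x)) x := by
    intro x hx
    have hpi : HasDerivAt (fun y : ℝ => π * y) π x := by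
      simpa using (hasDerivAt_id x).const_mul π
    have hsin : HasDerivAt (fun y => Real.sin (π * y)) (Real.cos (π * x) * π) x :=
      (Real.hasDerivAt_sin (π * x)).comp x hpi
    have hcos : HasDerivAt (fun y => Real.cos (π * y)) (-Real.sin (π * x) * π) x :=
      (Real.hasDerivAt_cos (π * x)).comp x hpi
    have h := (((hd' x hx).mul hsin)).sub ((((hu' x hx).mul hcos)).const_mul π)
    exact h.congr_deriv (by ring)
  have hWanti : StrictAntiOn W (Ioo 0 1) := by
    apply strictAntiOn_of_deriv_neg (convex_Ioo 0 1)
    · exact fun x hx => (hWd x hx).continuousAt.continuousWithinAt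
    · intro x hx
      rw [interior_Ioo] at hx
      rw [(hWd x hx).deriv]
      exact mul_neg_of_pos_of_neg (hsinpos x hx) (hd2neg x hx)
  have hdanti : StrictAntiOn (deriv u) (Ioo 0 1) := by
    apply strictAntiOn_of_deriv_neg (convex_Ioo 0 1) hcontd
    intro x hx
    rw [interior_Ioo] at hx
    have := hd2neg x hx
    nlinarith [mul_pos (mul_pos pi_pos pi_pos) (hupos x hx), sq (π)]
  -- upper bound for W near 0, lower bound near 1 (valid on all of (0,1))
  have hub : ∀ x ∈ Ioo (0:ℝ) 1, W x ≤ 3 * π * u x := by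
    intro x hx
    obtain ⟨hx0, hx1⟩ := hx
    obtain ⟨c, hc, hslope⟩ := exists_hasDerivAt_eq_slope u (deriv u)
      (by linarith : x / 2 < x)
      (huc.mono (Icc_subset_Icc (by linarith) (by linarith)))
      (fun y hy => hu' y ⟨by linarith [hy.1], by linarith [hy.2]⟩)
    have hcI : c ∈ Ioo (0:ℝ) 1 := ⟨by linarith [hc.1], by linarith [hc.2]⟩
    have hdc : deriv u x ≤ deriv u c := (hdanti hcI ⟨hx0, hx1⟩ hc.2).le
    have hu2 : 0 < u (x / 2) := hupos _ ⟨by linarith, by linarith⟩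
    have hxx : (0:ℝ) < x - x / 2 := by linarith
    have h1 : deriv u x * (x - x / 2) ≤ u x - u (x / 2) := by
      have h2 := hslope ▸ hdc
      exact (le_div_iff₀ hxx).mp h2
    have hdx : deriv u x ≤ 2 * u x / x := by
      rw [le_div_iff₀ hx0]; nlinarith
    have hsin_nonneg : 0 ≤ Real.sin (π * x) := (hsinpos x ⟨hx0, hx1⟩).le
    have hsin_le : Real.sin (π * x) ≤ π * x := (Real.sin_lt (mul_pos pi_pos hx0)).le
    have hcos1 : -1 ≤ Real.cos (π * x) := Real.neg_one_le_cos _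
    have hux : 0 < u x := hupos x ⟨hx0, hx1⟩
    have h2 : deriv u x * Real.sin (π * x) ≤ 2 * π * u x := by
      calc deriv u x * Real.sin (π * x) ≤ (2 * u x / x) * Real.sin (π * x) :=
            mul_le_mul_of_nonneg_right hdx hsin_nonneg
        _ ≤ (2 * u x / x) * (π * x) :=
            mul_le_mul_of_nonneg_left hsin_le (by positivity)
        _ = 2 * π * u x := by field_simp
    have h3 : -(π * (u x * Real.cos (π * x))) ≤ π * u x := by
      nlinarith [mul_nonneg (mul_nonneg pi_pos.le hux.le)
        (show (0:ℝ) ≤ 1 + Real.cos (π * x) by linarith)]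
    show deriv u x * Real.sin (π * x) - π * (u x * Real.cos (π * x)) ≤ 3 * π * u x
    linarith
  have hlb : ∀ x ∈ Ioo (0:ℝ) 1, -(3 * π * u x) ≤ W x := by
    intro x hx
    obtain ⟨hx0, hx1⟩ := hx
    obtain ⟨c, hc, hslope⟩ := exists_hasDerivAt_eq_slope u (deriv u)
      (by linarith : x < (1 + x) / 2)
      (huc.mono (Icc_subset_Icc (by linarith) (by linarith)))
      (fun y hy => hu' y ⟨by linarith [hy.1], by linarith [hy.2]⟩)
    have hcI : c ∈ Ioo (0:ℝ) 1 := ⟨by linarith [hc.1], by linarith [hc.2]⟩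
    have hdc : deriv u c ≤ deriv u x := (hdanti ⟨hx0, hx1⟩ hcI hc.1).le
    have hu2 : 0 < u ((1 + x) / 2) := hupos _ ⟨by linarith, by linarith⟩
    have hxx : (0:ℝ) < (1 + x) / 2 - x := by linarith
    have h1 : u ((1 + x) / 2) - u x ≤ deriv u x * ((1 + x) / 2 - x) := by
      have h2 := hslope ▸ hdc
      exact (div_le_iff₀ hxx).mp h2
    have hux : 0 < u x := hupos x ⟨hx0, hx1⟩
    have h1x : (0:ℝ) < 1 - x := by linarith
    have h1xne : (1:ℝ) - x ≠ 0 := ne_of_gt h1x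
    have hdx : -(2 * u x / (1 - x)) ≤ deriv u x := by
      rw [neg_le, le_div_iff₀ h1x]
      nlinarith
    have hsin_nonneg : 0 ≤ Real.sin (π * x) := (hsinpos x ⟨hx0, hx1⟩).le
    have hsin_le : Real.sin (π * x) ≤ π * (1 - x) := by
      have he : Real.sin (π * x) = Real.sin (π * (1 - x)) := by
        rw [mul_one_sub]
        exact (Real.sin_pi_sub (π * x)).symm
      rw [he]
      exact (Real.sin_lt (by nlinarith [pi_pos])).le
    have hcos1 : Real.cos (π * x) ≤ 1 := Real.cos_le_one _
    have h2 : -(2 * π * u x) ≤ deriv u x * Real.sin (π * x) := by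
      have hcneg : -(2 * u x / (1 - x)) ≤ 0 := neg_nonpos.mpr (div_nonneg (by linarith) (by linarith))
      calc -(2 * π * u x) = (-(2 * u x / (1 - x))) * (π * (1 - x)) := by
            field_simp
          _ ≤ (-(2 * u x / (1 - x))) * Real.sin (π * x) :=
            mul_le_mul_of_nonpos_left hsin_le hcneg
          _ ≤ deriv u x * Real.sin (π * x) :=
            mul_le_mul_of_nonneg_right hdx hsin_nonneg
    have h3 : -(π * u x) ≤ -(π * (u x * Real.cos (π * x))) := by
      nlinarith [mul_nonneg (mul_nonneg pi_pos.le hux.le)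
        (show (0:ℝ) ≤ 1 - Real.cos (π * x) by linarith)]
    show -(3 * π * u x) ≤ deriv u x * Real.sin (π * x) - π * (u x * Real.cos (π * x))
    linarith
  -- take limits at the endpoints
  have hq1 : (1:ℝ)/4 ∈ Ioo (0:ℝ) 1 := by norm_num
  have hq3 : (3:ℝ)/4 ∈ Ioo (0:ℝ) 1 := by norm_num
  have hne0 : (𝓝[Ioo (0:ℝ) 1] (0:ℝ)).NeBot := by
    rw [nhdsWithin_Ioo_eq_nhdsGT one_pos]; infer_instance
  have hne1 : (𝓝[Ioo (0:ℝ) 1] (1:ℝ)).NeBot := by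
    rw [nhdsWithin_Ioo_eq_nhdsLT one_pos]; infer_instance
  have htu0 : Tendsto u (𝓝[Ioo (0:ℝ) 1] 0) (𝓝 0) := by
    have h0 : ContinuousWithinAt u (Icc 0 1) 0 := huc 0 (by norm_num)
    have := (h0.mono Ioo_subset_Icc_self).tendsto
    rwa [hu0] at this
  have htu1 : Tendsto u (𝓝[Ioo (0:ℝ) 1] 1) (𝓝 0) := by
    have h0 : ContinuousWithinAt u (Icc 0 1) 1 := huc 1 (by norm_num)
    have := (h0.mono Ioo_subset_Icc_self).tendsto
    rwa [hu1] at this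
  have hW14 : W (1/4) ≤ 0 := by
    have htend : Tendsto (fun x => 3 * π * u x) (𝓝[Ioo (0:ℝ) 1] 0) (𝓝 0) := by
      have h3 := htu0.const_mul (3 * π)
      simpa using h3
    refine ge_of_tendsto htend ?_
    have hev : ∀ᶠ x in 𝓝[Ioo (0:ℝ) 1] 0, x < 1/4 :=
      eventually_nhdsWithin_of_eventually_nhds
        (Tendsto.eventually_lt_const (by norm_num) tendsto_id)
    filter_upwards [self_mem_nhdsWithin, hev] with x hx hlt
    exact le_trans (hWanti hx hq1 hlt).le (hub x hx)
  have hW34 : 0 ≤ W (3/4) := by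
    have htend : Tendsto (fun x => -(3 * π * u x)) (𝓝[Ioo (0:ℝ) 1] 1) (𝓝 0) := by
      have h3 := (htu1.const_mul (3 * π)).neg
      simpa using h3
    refine le_of_tendsto htend ?_
    have hev : ∀ᶠ x in 𝓝[Ioo (0:ℝ) 1] 1, 3/4 < x :=
      eventually_nhdsWithin_of_eventually_nhds
        (Tendsto.eventually_const_lt (by norm_num) tendsto_id)
    filter_upwards [self_mem_nhdsWithin, hev] with x hx hlt
    exact le_trans (hlb x hx) (hWanti hq3 hx hlt).le
  have := hWanti hq1 hq3 (by norm_num)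
  linarith
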